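/- Let u, v be CNPs with no null positions, let f be a unit-cost function, and suppose w = u − v contains a staircase on [1,k] (i.e., 0 < w_1 < w_2 < ... < w_k) and dist_f(u,v) = k. Then there exists a smooth sequence transforming u into v, i.e., a sequence E = (e_1,...,e_k) with u⟨E⟩ = v where for every i ∈ [k], e_i = (i, b_i, w_{i−1} − w_i) for some b_i ≥ k (with w_0 = 0). -/

import Mathlib

open scoped ENat

/-- A copy-number profile of dimension `n`: positions are `Fin n` (position `i+1` in 1-based terms),
values are non-negative integers. -/
abbrev CNP (n : ℕ) := Fin n → ℕ

/-- An event `(s, t, δ)`: affects 1-based positions in `[s, t]`, changing copy numbers by `δ`. -/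
abbrev Event := ℕ × ℕ × ℤ

/-- A valid event has `1 ≤ s ≤ t ≤ n` and `δ ≠ 0`. -/
def ValidEvent (n : ℕ) (e : Event) : Prop :=
  1 ≤ e.1 ∧ e.1 ≤ e.2.1 ∧ e.2.1 ≤ n ∧ e.2.2 ≠ 0

/-- Applying event `e = (s,t,δ)` to `u` : each 1-based position `i ∈ [s,t]` with `u_i > 0`
becomes `max(u_i + δ, 0)`; other positions are unchanged. -/
def applyEvent {n : ℕ} (u : CNP n) (e : Event) : CNP n :=
  fun i => if e.1 ≤ (i : ℕ) + 1 ∧ (i : ℕ) + 1 ≤ e.2.1 ∧ 0 < u i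
    then ((u i : ℤ) + e.2.2).toNat else u i

/-- Applying a sequence of events in order. -/
def applySeq {n : ℕ} (u : CNP n) (E : List Event) : CNP n :=
  E.foldl applyEvent u

/-- Cost of applying event `e` on `u` w.r.t. cost function `f`:
the maximum of `f (u_i) δ` over affected positions `i ∈ [s,t]`. -/
noncomputable def eventCost {n : ℕ} (f : ℕ → ℤ → ℕ∞) (u : CNP n) (e : Event) : ℕ∞ :=
  (Finset.univ.filter (fun i : Fin n => e.1 ≤ (i : ℕ) + 1 ∧ (i : ℕ) + 1 ≤ e.2.1)).sup
    (fun i => f (u i) e.2.2)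

/-- Total cost of applying a sequence of events, costs evaluated on successive profiles. -/
noncomputable def seqCost {n : ℕ} (f : ℕ → ℤ → ℕ∞) : CNP n → List Event → ℕ∞
  | _, [] => 0
  | u, e :: E => eventCost f u e + seqCost f (applyEvent u e) E

/-- `dist_f(u,v)`: minimum total cost of a sequence of valid events transforming `u` into `v`
(`⊤` if no such sequence exists). -/
noncomputable def distf {n : ℕ} (f : ℕ → ℤ → ℕ∞) (u v : CNP n) : ℕ∞ :=
  sInf { c | ∃ E : List Event, (∀ e ∈ E, ValidEvent n e) ∧ applySeq u E = v ∧ seqCost f u E = c }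

/-- A unit-cost function takes only values `1` and `∞`. -/
def UnitCost (f : ℕ → ℤ → ℕ∞) : Prop := ∀ c δ, f c δ = 1 ∨ f c δ = ⊤

/-- The most permissive cost function: every event costs `1`. -/
def anyCost : ℕ → ℤ → ℕ∞ := fun _ _ => 1

/-- `dist_any(u,v)`: minimum number of events transforming `u` into `v`. -/
noncomputable def distAny {n : ℕ} (u v : CNP n) : ℕ∞ := distf anyCost u v

/-- The difference vector `w = u - v` in 1-based indexing, extended by `w_0 = w_{n+1} = 0`. -/
def diffExt {n : ℕ} (u v : CNP n) (i : ℕ) : ℤ :=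
  if h : 1 ≤ i ∧ i ≤ n then (u ⟨i - 1, by omega⟩ : ℤ) - (v ⟨i - 1, by omega⟩ : ℤ) else 0

/-- `[a,b] ⊆ [0, n+1]` is a flat interval of `w` if `w` is constant on it. -/
def IsFlat (n : ℕ) (w : ℕ → ℤ) (a b : ℕ) : Prop :=
  a ≤ b ∧ b ≤ n + 1 ∧ ∀ i j, a ≤ i → i ≤ b → a ≤ j → j ≤ b → w i = w j

/-- A maximal flat interval: flat, and not properly contained in a flat interval. -/
def IsMaxFlat (n : ℕ) (w : ℕ → ℤ) (a b : ℕ) : Prop :=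
  IsFlat n w a b ∧ ∀ a' b', a' ≤ a → b ≤ b' → IsFlat n w a' b' → a' = a ∧ b' = b

/-- `|F_w|`: the number of maximal flat intervals of `w` over `[0, n+1]`. -/
noncomputable def numFlat (n : ℕ) (w : ℕ → ℤ) : ℕ :=
  Nat.card {p : ℕ × ℕ // IsMaxFlat n w p.1 p.2}

section Aux
variable {n : ℕ}

lemma applySeq_zero (E : List Event) (x : CNP n) (i : Fin n) (h : x i = 0) :
    applySeq x E i = 0 := by
  induction E generalizing x with
  | nil => exact h
  | cons e E ih =>
    apply ih
    simp [applyEvent, h]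

lemma applySeq_int (E : List Event) (x : CNP n) (i : Fin n)
    (h : 0 < applySeq x E i) :
    (applySeq x E i : ℤ) =
      (x i : ℤ) + ((E.map fun e => if e.1 ≤ (i : ℕ) + 1 ∧ (i : ℕ) + 1 ≤ e.2.1 then e.2.2 else 0).sum) := by
  induction E generalizing x with
  | nil => simp [applySeq]
  | cons e E ih =>
    have hrfl : applySeq x (e :: E) = applySeq (applyEvent x e) E := rfl
    rw [hrfl] at h
    have hx : 0 < x i := by
      rcases Nat.eq_zero_or_pos (x i) with h0 | h0
      · have h1 : applyEvent x e i = 0 := by simp [applyEvent, h0]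
        have := applySeq_zero E (applyEvent x e) i h1
        omega
      · exact h0
    have hy : 0 < applyEvent x e i := by
      rcases Nat.eq_zero_or_pos (applyEvent x e i) with h0 | h0
      · have := applySeq_zero E (applyEvent x e) i h0
        omega
      · exact h0
    have key : ((applyEvent x e i : ℕ) : ℤ) =
        (x i : ℤ) + (if e.1 ≤ (i : ℕ) + 1 ∧ (i : ℕ) + 1 ≤ e.2.1 then e.2.2 else 0) := by
      by_cases hc : e.1 ≤ (i : ℕ) + 1 ∧ (i : ℕ) + 1 ≤ e.2.1
      · have hval : applyEvent x e i = ((x i : ℤ) + e.2.2).toNat := by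
          unfold applyEvent
          rw [if_pos ⟨hc.1, hc.2, hx⟩]
        rw [hval, if_pos hc]
        have hy' : 0 < ((x i : ℤ) + e.2.2).toNat := hval ▸ hy
        omega
      · have hval : applyEvent x e i = x i := by
          unfold applyEvent
          rw [if_neg (by tauto)]
        rw [hval, if_neg hc]
        ring
    rw [hrfl, ih (applyEvent x e) h, key]
    simp only [List.map_cons, List.sum_cons]
    ring

lemma list_sum_get (L : List Event) (g : Event → ℤ) :
    (L.map g).sum = ∑ q : Fin L.length, g (L.get q) := by
  induction L with
  | nil => simp
  | cons a L ih =>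
    rw [List.map_cons, List.sum_cons, ih]
    rw [show (∑ q : Fin (a :: L).length, g ((a :: L).get q))
      = ∑ q : Fin (L.length + 1), g ((a :: L).get q) from rfl, Fin.sum_univ_succ]
    rfl

end Aux
section Cost
variable {n : ℕ}

lemma eventCost_unit {f : ℕ → ℤ → ℕ∞} (hf : UnitCost f) (x : CNP n) (e : Event)
    (he : ValidEvent n e) : eventCost f x e = 1 ∨ eventCost f x e = ⊤ := by
  obtain ⟨h1, h2, h3, h4⟩ := he
  have hlt : e.1 - 1 < n := by omega
  have hmem : (⟨e.1 - 1, hlt⟩ : Fin n) ∈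
      Finset.univ.filter (fun i : Fin n => e.1 ≤ (i : ℕ) + 1 ∧ (i : ℕ) + 1 ≤ e.2.1) := by
    simp only [Finset.mem_filter, Finset.mem_univ, true_and]
    constructor
    · omega
    · show e.1 - 1 + 1 ≤ e.2.1
      omega
  by_cases htop : ∃ i ∈ Finset.univ.filter
      (fun i : Fin n => e.1 ≤ (i : ℕ) + 1 ∧ (i : ℕ) + 1 ≤ e.2.1), f (x i) e.2.2 = ⊤
  · right
    obtain ⟨i, hi, hti⟩ := htop
    refine le_antisymm le_top ?_
    calc (⊤ : ℕ∞) = f (x i) e.2.2 := hti.symm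
      _ ≤ _ := Finset.le_sup (f := fun i => f (x i) e.2.2) hi
  · left
    push_neg at htop
    apply le_antisymm
    · apply Finset.sup_le
      intro i hi
      rcases hf (x i) e.2.2 with h | h
      · exact h.le
      · exact absurd h (htop i hi)
    · have := Finset.le_sup (f := fun i => f (x i) e.2.2) hmem
      rcases hf (x ⟨e.1 - 1, hlt⟩) e.2.2 with h | h
      · exact h ▸ this
      · exact absurd h (htop _ hmem)

lemma seqCost_unit {f : ℕ → ℤ → ℕ∞} (hf : UnitCost f) (E : List Event) (x : CNP n)
    (hE : ∀ e ∈ E, ValidEvent n e) :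
    seqCost f x E = (E.length : ℕ∞) ∨ seqCost f x E = ⊤ := by
  induction E generalizing x with
  | nil => left; simp [seqCost]
  | cons e E ih =>
    rcases eventCost_unit hf x e (hE e (by simp)) with h | h
    · rcases ih (applyEvent x e) (fun e' he' => hE e' (by simp [he'])) with h2 | h2
      · left
        simp only [seqCost, h, h2, List.length_cons]
        push_cast
        ring
      · right
        simp [seqCost, h, h2]
    · right
      simp [seqCost, h]

lemma dist_attained {f : ℕ → ℤ → ℕ∞} {u v : CNP n} {k : ℕ}
    (hdist : distf f u v = (k : ℕ∞)) :
    ∃ E : List Event, (∀ e ∈ E, ValidEvent n e) ∧ applySeq u E = v ∧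
      seqCost f u E = (k : ℕ∞) := by
  set Sset := { c | ∃ E : List Event, (∀ e ∈ E, ValidEvent n e) ∧ applySeq u E = v ∧ seqCost f u E = c } with hS
  have hd : sInf Sset = (k : ℕ∞) := hdist
  set T : Set ℕ := {a : ℕ | (a : ℕ∞) ∈ Sset} with hT
  have hTne : T.Nonempty := by
    by_contra hemp
    have hall : ∀ c ∈ Sset, c = ⊤ := by
      intro c hc
      induction c using ENat.recTopCoe with
      | top => rfl
      | coe a => exact absurd hc (by
          intro h; exact hemp ⟨a, h⟩)
    have : (⊤ : ℕ∞) ≤ sInf Sset := le_sInf (fun c hc => (hall c hc).ge)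
    rw [hd] at this
    exact absurd (top_le_iff.mp this).symm (by simp)
  have hattain : sInf Sset = ((sInf T : ℕ) : ℕ∞) := by
    apply le_antisymm
    · exact sInf_le (Nat.sInf_mem hTne)
    · apply le_sInf
      intro c hc
      induction c using ENat.recTopCoe with
      | top => exact le_top
      | coe a =>
        exact_mod_cast Nat.cast_le.mpr (Nat.sInf_le hc)
  rw [hattain] at hd
  have : sInf T = k := by exact_mod_cast hd
  have hmem : (k : ℕ∞) ∈ Sset := by
    rw [← this]
    exact Nat.sInf_mem hTne
  exact hmem

end Cost
section Forest

lemma forest_lemma {k : ℕ} (S : Finset (Fin k)) (r : Fin k → Fin k) (m : Fin k → ℤ)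
    (hm : ∀ i, 0 < m i)
    (hepos : ∀ i : Fin k, 0 < m i - ∑ j ∈ S.filter (fun j => r j = i), m j) :
    ∃ ρ : Fin k → Fin k, (∀ i ∉ S, ρ i = i) ∧ (∀ i, ρ i ∉ S) ∧
      (∀ i ∈ S, ρ i = ρ (r i)) ∧
      (∀ i0 ∉ S, ∑ p ∈ Finset.univ.filter (fun p => ρ p = i0),
        (m p - ∑ j ∈ S.filter (fun j => r j = p), m j) = m i0) := by
  classical
  have hleave : ∀ i : Fin k, ∃ jn : ℕ, r^[jn] i ∉ S := by
    by_contra hcon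
    push_neg at hcon
    obtain ⟨i, hi⟩ := hcon
    set A : Finset (Fin k) := Finset.univ.filter (fun x => ∃ jn : ℕ, r^[jn] i = x) with hA
    have hiA : i ∈ A := by
      simp only [hA, Finset.mem_filter, Finset.mem_univ, true_and]
      exact ⟨0, rfl⟩
    have hAS : ∀ x ∈ A, x ∈ S := by
      intro x hx
      simp only [hA, Finset.mem_filter, Finset.mem_univ, true_and] at hx
      obtain ⟨jn, hj⟩ := hx
      exact hj ▸ hi jn
    have hclosed : ∀ x ∈ A, r x ∈ A := by
      intro x hx
      simp only [hA, Finset.mem_filter, Finset.mem_univ, true_and] at hx ⊢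
      obtain ⟨jn, hj⟩ := hx
      exact ⟨jn + 1, by rw [Function.iterate_succ_apply', hj]⟩
    have hsub : A ⊆ S.filter (fun j => r j ∈ A) := by
      intro x hx
      exact Finset.mem_filter.mpr ⟨hAS x hx, hclosed x hx⟩
    have hfib : ∑ x ∈ A, ∑ j ∈ S.filter (fun j => r j = x), m j
        = ∑ j ∈ S.filter (fun j => r j ∈ A), m j := by
      rw [← Finset.sum_fiberwise_of_maps_to (t := A) (g := r)
        (fun j hj => (Finset.mem_filter.mp hj).2) m]
      apply Finset.sum_congr rfl
      intro x hx
      apply Finset.sum_congr _ (fun _ _ => rfl)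
      ext j
      simp only [Finset.mem_filter]
      constructor
      · exact fun ⟨h1, h2⟩ => ⟨⟨h1, h2 ▸ hx⟩, h2⟩
      · exact fun ⟨⟨h1, _⟩, h2⟩ => ⟨h1, h2⟩
    have hle : ∑ x ∈ A, (m x - ∑ j ∈ S.filter (fun j => r j = x), m j) ≤ 0 := by
      rw [Finset.sum_sub_distrib, hfib]
      have : ∑ x ∈ A, m x ≤ ∑ j ∈ S.filter (fun j => r j ∈ A), m j :=
        Finset.sum_le_sum_of_subset_of_nonneg hsub (fun j _ _ => (hm j).le)
      omega
    have hpos : 0 < ∑ x ∈ A, (m x - ∑ j ∈ S.filter (fun j => r j = x), m j) :=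
      Finset.sum_pos (fun x _ => hepos x) ⟨i, hiA⟩
    omega
  set J : Fin k → ℕ := fun i => Nat.find (hleave i) with hJ
  set ρ : Fin k → Fin k := fun i => r^[J i] i with hρ
  have hρ2 : ∀ i, ρ i ∉ S := fun i => Nat.find_spec (hleave i)
  have hρ1 : ∀ i ∉ S, ρ i = i := by
    intro i hi
    have : J i = 0 := by
      rw [hJ]
      simp only [Nat.find_eq_zero]
      simpa using hi
    simp [hρ, this]
  have hρ3 : ∀ i ∈ S, ρ i = ρ (r i) := by
    intro i hi
    have hJ0 : J i ≠ 0 := by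
      intro h0
      have := hρ2 i
      rw [hρ] at this
      simp only [h0] at this
      exact this (by simpa using hi)
    obtain ⟨mm, hmm⟩ := Nat.exists_eq_succ_of_ne_zero hJ0
    have hspec : r^[mm] (r i) ∉ S := by
      have h0 : r^[J i] i ∉ S := Nat.find_spec (hleave i)
      rw [hmm, Function.iterate_succ_apply] at h0
      exact h0
    have hle1 : J (r i) ≤ mm := Nat.find_le (h := hleave (r i)) hspec
    have hle2 : mm ≤ J (r i) := by
      have h1 : r^[J (r i) + 1] i ∉ S := by
        rw [Function.iterate_succ_apply]
        exact Nat.find_spec (hleave (r i))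
      have h2 : J i ≤ J (r i) + 1 := Nat.find_le (h := hleave i) h1
      omega
    have heq : J (r i) = mm := le_antisymm hle1 hle2
    rw [hρ]
    simp only
    rw [hmm, heq, Function.iterate_succ_apply]
  refine ⟨ρ, hρ1, hρ2, hρ3, ?_⟩
  intro i0 hi0
  set F : Finset (Fin k) := Finset.univ.filter (fun p => ρ p = i0) with hF
  have hswap : ∑ p ∈ F, ∑ j ∈ S.filter (fun j => r j = p), m j
      = ∑ j ∈ S.filter (fun j => ρ j = i0), m j := by
    have hmaps : ∀ j ∈ S.filter (fun j => ρ j = i0), r j ∈ F := by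
      intro j hj
      obtain ⟨hj1, hj2⟩ := Finset.mem_filter.mp hj
      exact Finset.mem_filter.mpr ⟨Finset.mem_univ _, by rw [← hρ3 j hj1]; exact hj2⟩
    rw [← Finset.sum_fiberwise_of_maps_to hmaps m]
    apply Finset.sum_congr rfl
    intro p hp
    apply Finset.sum_congr _ (fun _ _ => rfl)
    ext j
    simp only [Finset.mem_filter]
    constructor
    · intro ⟨h1, h2⟩
      have hpF : ρ p = i0 := (Finset.mem_filter.mp hp).2
      exact ⟨⟨h1, by rw [hρ3 j h1, h2, hpF]⟩, h2⟩
    · exact fun ⟨⟨h1, _⟩, h2⟩ => ⟨h1, h2⟩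
  rw [Finset.sum_sub_distrib, hswap]
  have hsplit : ∑ p ∈ F, m p
      = ∑ p ∈ F.filter (fun p => p ∈ S), m p + ∑ p ∈ F.filter (fun p => p ∉ S), m p :=
    (Finset.sum_filter_add_sum_filter_not F _ m).symm
  have h1 : F.filter (fun p => p ∈ S) = S.filter (fun j => ρ j = i0) := by
    ext p
    simp only [hF, Finset.mem_filter, Finset.mem_univ, true_and]
    tauto
  have h2 : F.filter (fun p => p ∉ S) = {i0} := by
    ext p
    simp only [hF, Finset.mem_filter, Finset.mem_univ, true_and, Finset.mem_singleton]
    constructor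
    · intro ⟨hp1, hp2⟩
      rw [← hρ1 p hp2, hp1]
    · intro h
      subst h
      exact ⟨hρ1 p hi0, hi0⟩
  rw [hsplit, h1, h2, Finset.sum_singleton]
  omega

end Forest
/-- if `u, v` have no null positions, `w = u - v` has a staircase on `[1, k]`
(`0 < w_1 < ... < w_k`, 1-based) and `dist_f(u,v) = k` for a unit-cost `f`, then there is a
smooth sequence transforming `u` into `v`: events `e_i = (i, b_i, w_{i-1} - w_i)` with
`b_i ≥ k`, for `i = 1, ..., k` (with `w_0 = 0`). -/
theorem stmt10 {n : ℕ} (u v : CNP n) (hu : ∀ i, 0 < u i) (hv : ∀ i, 0 < v i)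
    (f : ℕ → ℤ → ℕ∞) (hf : UnitCost f)
    (k : ℕ) (hk1 : 1 ≤ k) (hkn : k ≤ n)
    (hpos : 0 < diffExt u v 1)
    (hstair : ∀ i, 1 ≤ i → i < k → diffExt u v i < diffExt u v (i + 1))
    (hdist : distf f u v = (k : ℕ∞)) :
    ∃ E : List Event, (∀ e ∈ E, ValidEvent n e) ∧ applySeq u E = v ∧ E.length = k ∧
      ∀ j, j < k → ∃ b, k ≤ b ∧ b ≤ n ∧
        E[j]? = some (j + 1, b, diffExt u v j - diffExt u v (j + 1)) := by
  classical
  set W : ℕ → ℤ := diffExt u v with hW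
  have hW0 : W 0 = 0 := by simp [hW, diffExt]
  have hWval : ∀ i : Fin n, W ((i : ℕ) + 1) = (u i : ℤ) - (v i : ℤ) := by
    intro i
    have h1 : 1 ≤ (i : ℕ) + 1 ∧ (i : ℕ) + 1 ≤ n := ⟨by omega, by omega⟩
    rw [hW]
    unfold diffExt
    rw [dif_pos h1]
    congr 1 <;> · congr 1; exact Fin.eta _ _
  -- step 1 : extract an optimal sequence
  obtain ⟨E0, hval0, happ0, hcost0⟩ := dist_attained hdist
  have hlen0 : E0.length = k := by
    rcases seqCost_unit hf E0 u hval0 with h | h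
    · rw [hcost0] at h; exact_mod_cast h.symm
    · rw [hcost0] at h; exact absurd h.symm (by simp)
  set ev : Fin k → Event := fun q => E0.get (finCongr hlen0.symm q) with hev
  set es : Fin k → ℕ := fun i => (ev i).1 with hes
  set et : Fin k → ℕ := fun i => (ev i).2.1 with het
  set c : Fin k → ℤ := fun i => -(ev i).2.2 with hc
  have hvalid : ∀ i, 1 ≤ es i ∧ es i ≤ et i ∧ et i ≤ n ∧ c i ≠ 0 := by
    intro i
    have hmem : ev i ∈ E0 := List.get_mem E0 _
    obtain ⟨a, b, c', d⟩ := hval0 _ hmem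
    exact ⟨a, b, c', by simpa [hc] using d⟩
  -- coverage equation
  have hw : ∀ j : ℕ, j ≤ n →
      ∑ i : Fin k, (if es i ≤ j ∧ j ≤ et i then c i else 0) = W j := by
    intro j hjn
    rcases Nat.eq_zero_or_pos j with h0 | h1
    · subst h0
      rw [hW0]
      apply Finset.sum_eq_zero
      intro i _
      have := (hvalid i).1
      rw [if_neg (by omega)]
    · set p : Fin n := ⟨j - 1, by omega⟩ with hp
      have hp1 : (p : ℕ) + 1 = j := by
        show j - 1 + 1 = j
        omega
      have happly : 0 < applySeq u E0 p := by rw [happ0]; exact hv p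
      have hint := applySeq_int E0 u p happly
      rw [happ0, list_sum_get] at hint
      have hre : (∑ q : Fin E0.length,
            (if (E0.get q).1 ≤ (p : ℕ) + 1 ∧ (p : ℕ) + 1 ≤ (E0.get q).2.1
              then (E0.get q).2.2 else 0))
          = ∑ i : Fin k, (if es i ≤ j ∧ j ≤ et i then (ev i).2.2 else 0) := by
        apply Fintype.sum_equiv (finCongr hlen0)
        intro q
        rw [hp1]
        rfl
      rw [hre] at hint
      have hneg : ∑ i : Fin k, (if es i ≤ j ∧ j ≤ et i then c i else 0)
          = -∑ i : Fin k, (if es i ≤ j ∧ j ≤ et i then (ev i).2.2 else 0) := by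
        rw [← Finset.sum_neg_distrib]
        apply Finset.sum_congr rfl
        intro i _
        split_ifs
        · rfl
        · simp
      have hWj : W j = (u p : ℤ) - (v p : ℤ) := by
        rw [← hp1]
        exact hWval p
      rw [hneg, hWj]
      linarith
  -- staircase positivity
  have hd : ∀ q : Fin k, 0 < W ((q : ℕ) + 1) - W (q : ℕ) := by
    intro q
    rcases Nat.eq_zero_or_pos (q : ℕ) with h0 | h0
    · rw [h0, hW0]
      simpa using hpos
    · have := hstair (q : ℕ) h0 q.isLt
      omega
  -- boundary decomposition
  have hC1 : ∀ q : Fin k, W ((q : ℕ) + 1) - W (q : ℕ) =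
      ∑ i : Fin k, ((if es i = (q : ℕ) + 1 then c i else 0)
        - (if et i = (q : ℕ) then c i else 0)) := by
    intro q
    have hq := q.isLt
    rw [← hw ((q : ℕ) + 1) (by omega), ← hw (q : ℕ) (by omega), ← Finset.sum_sub_distrib]
    apply Finset.sum_congr rfl
    intro i _
    have hvi := hvalid i
    split_ifs <;> first | ring1 | (exfalso; omega)
  -- witness function
  have hwit : ∀ q : Fin k, ∃ i : Fin k,
      (0 < c i ∧ es i = (q : ℕ) + 1) ∨ (c i < 0 ∧ et i = (q : ℕ)) := by
    intro q
    by_contra hcon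
    push_neg at hcon
    have h1 := hd q
    rw [hC1 q] at h1
    have h2 : ∑ i : Fin k, ((if es i = (q : ℕ) + 1 then c i else 0)
        - (if et i = (q : ℕ) then c i else 0)) ≤ 0 := by
      apply Finset.sum_nonpos
      intro i _
      have hci := (hvalid i).2.2.2
      have hvi := hvalid i
      obtain ⟨hA, hB⟩ := hcon i
      split_ifs with hs1 ht1 ht1
      · exfalso; omega
      · have : ¬ 0 < c i := fun h => hA h hs1
        omega
      · have : ¬ c i < 0 := fun h => hB h ht1
        omega
      · omega
    linarith
  choose ι hι using hwit
  have hinj : Function.Injective ι := by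
    intro a b hab
    rcases hι a with ⟨ha1, ha2⟩ | ⟨ha1, ha2⟩ <;>
      rcases hι b with ⟨hb1, hb2⟩ | ⟨hb1, hb2⟩ <;>
      rw [hab] at ha1 ha2 <;>
      [skip; (exfalso; omega); (exfalso; omega); skip] <;>
      · apply Fin.ext; omega
  have hsurj : Function.Surjective ι := Finite.surjective_of_injective hinj
  have huniq : ∀ (q : Fin k) (i : Fin k),
      ((0 < c i ∧ es i = (q : ℕ) + 1) ∨ (c i < 0 ∧ et i = (q : ℕ))) → i = ι q := by
    intro q i hWi
    obtain ⟨q', hq'⟩ := hsurj i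
    suffices hqq : q' = q by rw [← hq', hqq]
    subst hq'
    rcases hι q' with ⟨ha1, ha2⟩ | ⟨ha1, ha2⟩ <;>
      rcases hWi with ⟨hb1, hb2⟩ | ⟨hb1, hb2⟩ <;>
      [skip; (exfalso; omega); (exfalso; omega); skip] <;>
      · apply Fin.ext; omega
  have hP : ∀ i, 0 < c i → 1 ≤ es i ∧ es i ≤ k := by
    intro i hci
    obtain ⟨q, rfl⟩ := hsurj i
    rcases hι q with ⟨h1, h2⟩ | ⟨h1, h2⟩
    · have := q.isLt; omega
    · omega
  have hN : ∀ i, c i < 0 → et i < k := by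
    intro i hci
    obtain ⟨q, rfl⟩ := hsurj i
    rcases hι q with ⟨h1, h2⟩ | ⟨h1, h2⟩
    · omega
    · have := q.isLt; omega
  -- nonbig events and discharge map
  set S : Finset (Fin k) := Finset.univ.filter (fun i => ¬(0 < c i ∧ k ≤ et i)) with hSdef
  have hmemS : ∀ i, i ∈ S ↔ ¬(0 < c i ∧ k ≤ et i) := by
    intro i; simp [hSdef]
  have hbigmem : ∀ i, i ∉ S → 0 < c i ∧ k ≤ et i := by
    intro i hi
    by_contra hcon
    exact hi ((hmemS i).mpr hcon)
  set Dn : Fin k → ℕ := fun i => if c i < 0 then es i else et i + 1 with hDn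
  have hD : ∀ i ∈ S, 1 ≤ Dn i ∧ Dn i ≤ k := by
    intro i hi
    have hvi := hvalid i
    rw [hmemS] at hi
    rcases lt_trichotomy (c i) 0 with hci | hci | hci
    · have := hN i hci
      rw [hDn]; simp only [if_pos hci]
      omega
    · exact absurd hci hvi.2.2.2
    · have : ¬ k ≤ et i := fun hk' => hi ⟨hci, hk'⟩
      rw [hDn]; simp only [if_neg (by omega : ¬ c i < 0)]
      omega
  set idx : Fin k → Fin k := fun i => ⟨min (Dn i) k - 1, by omega⟩ with hidx
  set r : Fin k → Fin k := fun i => ι (idx i) with hr'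
  have hr : ∀ i ∈ S, ∀ q : Fin k, (r i = ι q ↔ Dn i = (q : ℕ) + 1) := by
    intro i hi q
    have hDi := hD i hi
    constructor
    · intro h
      have h2 := hinj h
      have h3 : min (Dn i) k - 1 = (q : ℕ) := congrArg Fin.val h2
      have := q.isLt
      omega
    · intro h
      have hq : idx i = q := by
        apply Fin.ext
        show min (Dn i) k - 1 = (q : ℕ)
        omega
      show ι (idx i) = ι q
      rw [hq]
  set m : Fin k → ℤ := fun i => |c i| with hm'
  have hm : ∀ i, 0 < m i := fun i => abs_pos.mpr (hvalid i).2.2.2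
  -- the key pointwise identity
  have hstar : ∀ q : Fin k, W ((q : ℕ) + 1) - W (q : ℕ) =
      m (ι q) - ∑ j ∈ S.filter (fun j => r j = ι q), m j := by
    intro q
    rw [hC1 q]
    have hR1 : ∑ i : Fin k, (if i = ι q then m i else 0) = m (ι q) := by simp
    have hR2 : ∑ j ∈ S.filter (fun j => r j = ι q), m j
        = ∑ i : Fin k, (if i ∈ S ∧ r i = ι q then m i else 0) := by
      have hfe : S.filter (fun j => r j = ι q)
          = Finset.univ.filter (fun i => i ∈ S ∧ r i = ι q) := by
        ext i
        simp only [Finset.mem_filter, Finset.mem_univ, true_and]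
      rw [hfe, Finset.sum_filter]
    rw [← hR1, hR2, ← Finset.sum_sub_distrib]
    apply Finset.sum_congr rfl
    intro i _
    by_cases hiq : i = ι q
    · have hwq := hι q
      rw [← hiq] at hwq
      rcases hwq with ⟨h1, h2⟩ | ⟨h1, h2⟩
      · have hvq := hvalid i
        have hBt : ¬ et i = (q : ℕ) := by omega
        have hnotS : ¬ (i ∈ S ∧ r i = ι q) := by
          rintro ⟨hS', hr'⟩
          have hd2 := (hr _ hS' q).mp hr'
          rw [hDn] at hd2
          simp only [if_neg (by omega : ¬ c i < 0)] at hd2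
          omega
        rw [if_pos h2, if_neg hBt, if_pos hiq, if_neg hnotS]
        simp only [hm']
        rw [abs_of_pos h1]
        try ring
      · have hvq := hvalid i
        have hAs : ¬ es i = (q : ℕ) + 1 := by omega
        have hnot : ¬ (i ∈ S ∧ r i = ι q) := by
          rintro ⟨hS', hr'⟩
          have hd2 := (hr _ hS' q).mp hr'
          rw [hDn] at hd2
          simp only [if_pos h1] at hd2
          omega
        rw [if_neg hAs, if_pos h2, if_pos hiq, if_neg hnot]
        simp only [hm']
        rw [abs_of_neg h1]
        try ring
    · rw [if_neg hiq]
      have hvi := hvalid i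
      rcases lt_trichotomy (c i) 0 with hci | hci | hci
      · have hiS : i ∈ S := (hmemS i).mpr (by rintro ⟨hp', _⟩; omega)
        have hBt : ¬ et i = (q : ℕ) := fun h => hiq (huniq q i (Or.inr ⟨hci, h⟩))
        rw [if_neg hBt]
        have hDni : Dn i = es i := by rw [hDn]; simp only [if_pos hci]
        by_cases hsi : es i = (q : ℕ) + 1
        · have hcond : i ∈ S ∧ r i = ι q := ⟨hiS, (hr i hiS q).mpr (by rw [hDni, hsi])⟩
          rw [if_pos hsi, if_pos hcond]
          simp only [hm']
          rw [abs_of_neg hci]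
          try ring
        · have hcond : ¬ (i ∈ S ∧ r i = ι q) := by
            rintro ⟨hS', hr'⟩
            have hd2 := (hr _ hS' q).mp hr'
            rw [hDni] at hd2
            exact hsi hd2
          rw [if_neg hsi, if_neg hcond]
      · exact absurd hci hvi.2.2.2
      · have hAs : ¬ es i = (q : ℕ) + 1 := fun h => hiq (huniq q i (Or.inl ⟨hci, h⟩))
        rw [if_neg hAs]
        by_cases hti : et i = (q : ℕ)
        · have hiS : i ∈ S := (hmemS i).mpr (by rintro ⟨_, hk'⟩; have := q.isLt; omega)
          have hDni : Dn i = et i + 1 := by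
            rw [hDn]; simp only [if_neg (by omega : ¬ c i < 0)]
          have hcond : i ∈ S ∧ r i = ι q := ⟨hiS, (hr i hiS q).mpr (by rw [hDni, hti])⟩
          rw [if_pos hti, if_pos hcond]
          simp only [hm']
          rw [abs_of_pos hci]
          try ring
        · have hcond : ¬ (i ∈ S ∧ r i = ι q) := by
            rintro ⟨hS', hr'⟩
            have hd2 := (hr _ hS' q).mp hr'
            rw [hDn] at hd2
            simp only [if_neg (by omega : ¬ c i < 0)] at hd2
            omega
          rw [if_neg hti, if_neg hcond]
  have hepos : ∀ i : Fin k, 0 < m i - ∑ j ∈ S.filter (fun j => r j = i), m j := by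
    intro i
    obtain ⟨q, rfl⟩ := hsurj i
    rw [← hstar q]
    exact hd q
  obtain ⟨ρ, hρ1, hρ2, hρ3, hgroup⟩ := forest_lemma S r m hm hepos
  set bq : Fin k → ℕ := fun q => et (ρ (ι q)) with hbq'
  have hbq : ∀ q, k ≤ bq q ∧ bq q ≤ n := by
    intro q
    exact ⟨(hbigmem _ (hρ2 (ι q))).2, (hvalid _).2.2.1⟩
  -- the master identity
  have hkey : ∀ j : ℕ, 1 ≤ j → j ≤ n →
      ∑ q : Fin k, (if (q : ℕ) + 1 ≤ j ∧ j ≤ bq q then (W ((q : ℕ) + 1) - W (q : ℕ)) else 0)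
        = W j := by
    intro j hj1 hjn
    by_cases hjk : j ≤ k
    · have hstep1 : ∑ q : Fin k,
          (if (q : ℕ) + 1 ≤ j ∧ j ≤ bq q then (W ((q : ℕ) + 1) - W (q : ℕ)) else 0)
          = ∑ x ∈ Finset.range k, (if x < j then W (x + 1) - W x else 0) := by
        rw [← Fin.sum_univ_eq_sum_range (fun x => if x < j then W (x + 1) - W x else 0) k]
        apply Finset.sum_congr rfl
        intro q _
        have hb := (hbq q).1
        apply if_congr _ rfl rfl
        constructor
        · rintro ⟨hx, _⟩; omega
        · intro hx; exact ⟨by omega, by omega⟩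
      rw [hstep1, ← Finset.sum_subset (Finset.range_subset_range.mpr hjk)
        (fun x _ hx => if_neg (by simpa using hx))]
      have : ∑ x ∈ Finset.range j, (if x < j then W (x + 1) - W x else 0)
          = ∑ x ∈ Finset.range j, (W (x + 1) - W x) :=
        Finset.sum_congr rfl (fun x hx => if_pos (Finset.mem_range.mp hx))
      rw [this, Finset.sum_range_sub W j, hW0]
      ring
    · push_neg at hjk
      have hstep1 : ∑ q : Fin k,
          (if (q : ℕ) + 1 ≤ j ∧ j ≤ bq q then (W ((q : ℕ) + 1) - W (q : ℕ)) else 0)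
          = ∑ i : Fin k, (if j ≤ et (ρ i)
              then (m i - ∑ j' ∈ S.filter (fun j' => r j' = i), m j') else 0) := by
        apply Fintype.sum_equiv (Equiv.ofBijective ι ⟨hinj, hsurj⟩)
        intro q
        have hcong : ((q : ℕ) + 1 ≤ j ∧ j ≤ bq q) ↔ (j ≤ bq q) :=
          ⟨fun h => h.2, fun h => ⟨by have := q.isLt; omega, h⟩⟩
        rw [if_congr hcong rfl rfl, hstar q]
        rfl
      have hstep2 : ∑ i : Fin k, (if j ≤ et (ρ i)
              then (m i - ∑ j' ∈ S.filter (fun j' => r j' = i), m j') else 0)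
          = ∑ i0 ∈ Finset.univ.filter (fun i0 => i0 ∉ S),
              (if j ≤ et i0 then m i0 else 0) := by
        rw [← Finset.sum_fiberwise_of_maps_to (g := ρ)
          (t := Finset.univ.filter (fun i0 => i0 ∉ S))
          (fun x _ => Finset.mem_filter.mpr ⟨Finset.mem_univ _, hρ2 x⟩)]
        apply Finset.sum_congr rfl
        intro i0 hi0
        have hi0S : i0 ∉ S := (Finset.mem_filter.mp hi0).2
        by_cases hjt : j ≤ et i0
        · rw [if_pos hjt, ← hgroup i0 hi0S]
          apply Finset.sum_congr rfl
          intro x hx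
          have hx' : ρ x = i0 := (Finset.mem_filter.mp hx).2
          rw [hx', if_pos hjt]
        · rw [if_neg hjt]
          apply Finset.sum_eq_zero
          intro x hx
          have hx' : ρ x = i0 := (Finset.mem_filter.mp hx).2
          rw [hx', if_neg hjt]
      have hstep3 : ∑ i0 ∈ Finset.univ.filter (fun i0 => i0 ∉ S),
              (if j ≤ et i0 then m i0 else 0) = W j := by
        rw [← hw j hjn, Finset.sum_filter]
        apply Finset.sum_congr rfl
        intro i _
        by_cases hiS : i ∈ S
        · have hnc : ¬ (es i ≤ j ∧ j ≤ et i) := by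
            rintro ⟨hs1, ht1⟩
            have hiS' := (hmemS i).mp hiS
            rcases lt_trichotomy (c i) 0 with hci | hci | hci
            · have := hN i hci; omega
            · exact (hvalid i).2.2.2 hci
            · exact hiS' ⟨hci, by omega⟩
          rw [if_neg (not_not_intro hiS), if_neg hnc]
        · rw [if_pos hiS]
          obtain ⟨hci, hkt⟩ := hbigmem i hiS
          have hsk := (hP i hci).2
          by_cases hjt : j ≤ et i
          · rw [if_pos hjt, if_pos (⟨by omega, hjt⟩ : es i ≤ j ∧ j ≤ et i)]
            simp only [hm']
            rw [abs_of_pos hci]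
          · rw [if_neg hjt, if_neg (fun hcon => hjt hcon.2)]
      rw [hstep1, hstep2, hstep3]
  -- construct the smooth sequence
  set Ev : Fin k → Event := fun q => ((q : ℕ) + 1, bq q, W (q : ℕ) - W ((q : ℕ) + 1)) with hEv
  refine ⟨List.ofFn Ev, ?_, ?_, by simp, ?_⟩
  · intro e he
    rw [List.mem_ofFn] at he
    obtain ⟨q, rfl⟩ := he
    have h1 := hbq q
    have h2 := hd q
    have h3 := q.isLt
    refine ⟨?_, ?_, ?_, ?_⟩
    · show 1 ≤ (q : ℕ) + 1; omega
    · show (q : ℕ) + 1 ≤ bq q; omega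
    · show bq q ≤ n; omega
    · show W (q : ℕ) - W ((q : ℕ) + 1) ≠ 0; omega
  · -- applySeq u (List.ofFn Ev) = v
    have hlenE : (List.ofFn Ev).length = k := List.length_ofFn
    funext i
    have hWvi : W ((i : ℕ) + 1) = (u i : ℤ) - (v i : ℤ) := hWval i
    have hvi := hv i
    set Scov : ℕ → ℤ := fun mm => ∑ q : Fin k,
      (if (q : ℕ) < mm ∧ (q : ℕ) + 1 ≤ (i : ℕ) + 1 ∧ (i : ℕ) + 1 ≤ bq q
        then (W ((q : ℕ) + 1) - W (q : ℕ)) else 0) with hScov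
    have hSk : Scov k = W ((i : ℕ) + 1) := by
      simp only [hScov]
      rw [← hkey ((i : ℕ) + 1) (by omega) (by omega)]
      apply Finset.sum_congr rfl
      intro q _
      apply if_congr _ rfl rfl
      have := q.isLt
      constructor
      · rintro ⟨_, h2, h3⟩; exact ⟨h2, h3⟩
      · rintro ⟨h2, h3⟩; exact ⟨by omega, h2, h3⟩
    have hSle : ∀ mm, Scov mm ≤ W ((i : ℕ) + 1) := by
      intro mm
      rw [← hSk]
      simp only [hScov]
      apply Finset.sum_le_sum
      intro q _
      by_cases h1 : (q : ℕ) < mm ∧ (q : ℕ) + 1 ≤ (i : ℕ) + 1 ∧ (i : ℕ) + 1 ≤ bq q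
      · rw [if_pos h1, if_pos ⟨q.isLt, h1.2⟩]
      · rw [if_neg h1]
        by_cases h2 : (q : ℕ) < k ∧ (q : ℕ) + 1 ≤ (i : ℕ) + 1 ∧ (i : ℕ) + 1 ≤ bq q
        · rw [if_pos h2]; exact (hd q).le
        · rw [if_neg h2]
    have hind : ∀ mm, mm ≤ k →
        ((applySeq u ((List.ofFn Ev).take mm) i : ℕ) : ℤ) = (u i : ℤ) - Scov mm := by
      intro mm
      induction mm with
      | zero =>
        intro _
        rw [List.take_zero]
        have h0 : Scov 0 = 0 := by
          simp only [hScov]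
          apply Finset.sum_eq_zero
          intro q _
          rw [if_neg (by omega)]
        rw [h0]
        simp [applySeq]
      | succ mm ih =>
        intro hmk
        have hmm : mm < k := hmk
        have hget : (List.ofFn Ev)[mm]? = some (Ev ⟨mm, hmm⟩) := by
          simp [List.getElem?_ofFn, hmm]
        have htake : (List.ofFn Ev).take (mm + 1)
            = (List.ofFn Ev).take mm ++ [Ev ⟨mm, hmm⟩] := by
          rw [List.take_succ, hget]
          rfl
        rw [htake]
        have happend : applySeq u ((List.ofFn Ev).take mm ++ [Ev ⟨mm, hmm⟩])
            = applyEvent (applySeq u ((List.ofFn Ev).take mm)) (Ev ⟨mm, hmm⟩) := by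
          unfold applySeq
          rw [List.foldl_append]
          rfl
        rw [happend]
        set x := applySeq u ((List.ofFn Ev).take mm) with hx
        have hxi : (x i : ℤ) = (u i : ℤ) - Scov mm := ih (by omega)
        have hxpos : 0 < x i := by
          have h1 := hSle mm
          omega
        by_cases hcov : mm + 1 ≤ (i : ℕ) + 1 ∧ (i : ℕ) + 1 ≤ bq ⟨mm, hmm⟩
        · have happ : applyEvent x (Ev ⟨mm, hmm⟩) i
              = ((x i : ℤ) + (W mm - W (mm + 1))).toNat := by
            unfold applyEvent
            rw [if_pos ⟨hcov.1, hcov.2, hxpos⟩]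
          have hpt : ∀ q : Fin k,
              (if (q : ℕ) < mm + 1 ∧ (q : ℕ) + 1 ≤ (i : ℕ) + 1 ∧ (i : ℕ) + 1 ≤ bq q
                then (W ((q : ℕ) + 1) - W (q : ℕ)) else 0)
              = (if (q : ℕ) < mm ∧ (q : ℕ) + 1 ≤ (i : ℕ) + 1 ∧ (i : ℕ) + 1 ≤ bq q
                then (W ((q : ℕ) + 1) - W (q : ℕ)) else 0)
              + (if (q : ℕ) = mm ∧ (q : ℕ) + 1 ≤ (i : ℕ) + 1 ∧ (i : ℕ) + 1 ≤ bq q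
                then (W ((q : ℕ) + 1) - W (q : ℕ)) else 0) := by
            intro q
            split_ifs <;> first | ring1 | (exfalso; omega)
          have hSstep : Scov (mm + 1) = Scov mm + (W (mm + 1) - W mm) := by
            simp only [hScov]
            rw [Finset.sum_congr rfl (fun q _ => hpt q), Finset.sum_add_distrib]
            congr 1
            rw [Finset.sum_eq_single_of_mem (⟨mm, hmm⟩ : Fin k) (Finset.mem_univ _)
              (fun q _ hqne => if_neg (fun hcon => hqne (Fin.ext hcon.1)))]
            rw [if_pos ⟨rfl, hcov⟩]
          have htn : (u i : ℤ) - Scov (mm + 1) = (x i : ℤ) + (W mm - W (mm + 1)) := by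
            rw [hxi, hSstep]; ring
          have hnn : 0 ≤ (x i : ℤ) + (W mm - W (mm + 1)) := by
            rw [← htn]
            have h1 := hSle (mm + 1)
            omega
          rw [happ, Int.toNat_of_nonneg hnn, ← htn]
        · have happ : applyEvent x (Ev ⟨mm, hmm⟩) i = x i := by
            unfold applyEvent
            rw [if_neg]
            rintro ⟨h1, h2, _⟩
            exact hcov ⟨h1, h2⟩
          rw [happ, hxi]
          have hSeq : Scov (mm + 1) = Scov mm := by
            simp only [hScov]
            apply Finset.sum_congr rfl
            intro q _
            apply if_congr _ rfl rfl
            constructor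
            · rintro ⟨h1, h2⟩
              refine ⟨?_, h2⟩
              rcases Nat.lt_succ_iff_lt_or_eq.mp h1 with h | h
              · exact h
              · exfalso
                apply hcov
                have hqe : q = ⟨mm, hmm⟩ := Fin.ext h
                rw [hqe] at h2
                exact h2
            · rintro ⟨h1, h2⟩
              exact ⟨by omega, h2⟩
          rw [hSeq]
    have htk : (List.ofFn Ev).take k = List.ofFn Ev :=
      List.take_of_length_le hlenE.le
    have hfinal := hind k le_rfl
    rw [htk, hSk] at hfinal
    have hgoal : ((applySeq u (List.ofFn Ev) i : ℕ) : ℤ) = ((v i : ℕ) : ℤ) := by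
      rw [hfinal, hWvi]
      ring
    exact_mod_cast hgoal
  · intro j hj
    refine ⟨bq ⟨j, hj⟩, (hbq _).1, (hbq _).2, ?_⟩
    rw [List.getElem?_ofFn]
    simp [hj, hEv]
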